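/- (Lower bound on weighted Catalan numbers via level-2 paths) Fix sequences λ with λ_i > 0 and ρ with ρ_i ≥ 0. Then for every integer k ≥ 2, q_2^{(k)} · λ_1/((1+λ_1+D_1)(1+λ_2+D_2)^2) ≤ C_k, where C_k is the weighted Catalan number. -/

import Mathlib

open Filter Finset

/-- Final height of a `±1` path started at height `j`; `true` is a rise step,
`false` is a fall step. -/
def endH : ℕ → List Bool → ℕ
  | j, [] => j
  | j, true :: s => endH (j + 1) s
  | j, false :: s => endH (j - 1) s

/-- `isDyck j s` holds when the path `s` started at height `j` never goes below height 0
(every fall step occurs from height ≥ 1). -/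
def isDyck : ℕ → List Bool → Bool
  | _, [] => true
  | j, true :: s => isDyck (j + 1) s
  | j, false :: s => decide (1 ≤ j) && isDyck (j - 1) s

/-- `isJump j s` holds when the path `s` started at height `j` stays at height ≥ 1
(every fall step occurs from height ≥ 2). -/
def isJump : ℕ → List Bool → Bool
  | _, [] => true
  | j, true :: s => isJump (j + 1) s
  | j, false :: s => decide (2 ≤ j) && isJump (j - 1) s

/-- Weight of a lattice path: a rise step from height `j` has weight `u j`, a fall step
from height `j+1` to `j` has weight `v j`. -/
noncomputable def dwt (u v : ℕ → ℝ) : ℕ → List Bool → ℝ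
  | _, [] => 1
  | j, true :: s => u j * dwt u v (j + 1) s
  | j, false :: s => v (j - 1) * dwt u v (j - 1) s

/-- Weight `p(γ)` of a jump-chain path: an up-step from height `j` has weight
`λ_j/(1+λ_j+D_j)`, a down-step from height `j` has weight `1/(1+λ_j+D_j)`. -/
noncomputable def jwt (lam Dd : ℕ → ℝ) : ℕ → List Bool → ℝ
  | _, [] => 1
  | j, true :: s => lam j / (1 + lam j + Dd j) * jwt lam Dd (j + 1) s
  | j, false :: s => 1 / (1 + lam j + Dd j) * jwt lam Dd (j - 1) s

/-- `D_j = Σ_{i=1}^j ρ_i`. -/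
noncomputable def Dd (rho : ℕ → ℝ) (j : ℕ) : ℝ := ∑ i ∈ Finset.Icc 1 j, rho i

/-- `u(j) = λ_{j+1}/(1+λ_{j+1}+D_{j+1})`. -/
noncomputable def uWt (lam rho : ℕ → ℝ) (j : ℕ) : ℝ :=
  lam (j + 1) / (1 + lam (j + 1) + Dd rho (j + 1))

/-- `v(j) = 1/(1+λ_{j+2}+D_{j+2})`. -/
noncomputable def vWt (lam rho : ℕ → ℝ) (j : ℕ) : ℝ :=
  1 / (1 + lam (j + 2) + Dd rho (j + 2))

/-- The weighted Catalan number `C_k`: the sum of `ω(γ)` over all Dyck paths `γ` of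
length `2k` (paths of `k` rise and `k` fall steps from height 0 staying at height ≥ 0). -/
noncomputable def Ck (lam rho : ℕ → ℝ) (k : ℕ) : ℝ :=
  ∑ γ : Fin (2 * k) → Bool,
    if isDyck 0 (List.ofFn γ) = true ∧ endH 0 (List.ofFn γ) = 0 then
      dwt (uWt lam rho) (vWt lam rho) 0 (List.ofFn γ)
    else 0

/-- The power series `Σ_k C_k z^k` as a formal multilinear series over `ℂ`. -/
noncomputable def gSeries (lam rho : ℕ → ℝ) : FormalMultilinearSeries ℂ ℂ ℂ :=
  fun n => FormalMultilinearSeries.ofScalars ℂ (fun k => (Ck lam rho k : ℂ)) n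

/-- `M`, the radius of convergence of `g(z) = Σ_k C_k z^k`. -/
noncomputable def radiusM (lam rho : ℕ → ℝ) : ENNReal := (gSeries lam rho).radius

/-- `σ(ℓ) = ∏_{n=1}^ℓ 1/(1+D_n)`. -/
noncomputable def sigmaWt (rho : ℕ → ℝ) (l : ℕ) : ℝ :=
  ∏ n ∈ Finset.Icc 1 l, 1 / (1 + Dd rho n)

/-- `q_ℓ^{(k)} = Σ_{γ ∈ Γ_ℓ^{(k)}} p(γ) σ(ℓ)`, where `Γ_ℓ^{(k)}` is the set of jump-chain
paths of length `2k − ℓ − 1` that start at height 1, stay at height ≥ 1, and whose final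
step is an up-step ending at height `ℓ`. -/
noncomputable def qsum (lam rho : ℕ → ℝ) (k l : ℕ) : ℝ :=
  (∑ γ : Fin (2 * k - l - 1) → Bool,
    if isJump 1 (List.ofFn γ) = true ∧ endH 1 (List.ofFn γ) = l ∧
        (List.ofFn γ).getLast? = some true then
      jwt lam (Dd rho) 1 (List.ofFn γ)
    else 0) * sigmaWt rho l

/-- `Γ_ℓ^{(k)}`, as a set of step lists. -/
def Gamma (k l : ℕ) : Set (List Bool) :=
  {s | s.length = 2 * k - l - 1 ∧ isJump 1 s = true ∧ endH 1 s = l ∧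
    s.getLast? = some true}

/-- The path modification `γ ↦ γ̃`: insert `ℓ − 2` consecutive down-steps immediately
before the final (upward) step. -/
def tilde (l : ℕ) (s : List Bool) : List Bool :=
  s.dropLast ++ List.replicate (l - 2) false ++ [true]


lemma endH_append : ∀ (s t : List Bool) (j : ℕ), endH j (s ++ t) = endH (endH j s) t := by
  intro s
  induction s with
  | nil => intro t j; rfl
  | cons b s ih => intro t j; cases b <;> simp [endH, ih]

lemma dwt_append (u v : ℕ → ℝ) : ∀ (s t : List Bool) (j : ℕ),
    dwt u v j (s ++ t) = dwt u v j s * dwt u v (endH j s) t := by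
  intro s
  induction s with
  | nil => intro t j; simp [dwt, endH]
  | cons b s ih => intro t j; cases b <;> simp [dwt, endH, ih, mul_assoc]

lemma isDyck_append : ∀ (s t : List Bool) (j : ℕ),
    isDyck j (s ++ t) = (isDyck j s && isDyck (endH j s) t) := by
  intro s
  induction s with
  | nil => intro t j; simp [isDyck, endH]
  | cons b s ih => intro t j; cases b <;> simp [isDyck, endH, ih, Bool.and_assoc]

lemma isDyck_of_isJump : ∀ (s : List Bool) (j : ℕ), isJump (j + 1) s = true →
    isDyck j s = true := by
  intro s
  induction s with
  | nil => intro j _; rfl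
  | cons b s ih =>
    intro j h
    cases b
    · simp only [isJump, Bool.and_eq_true, decide_eq_true_eq] at h
      obtain ⟨h2, h3⟩ := h
      have hj : 1 ≤ j := by omega
      have hj1 : j - 1 + 1 = j := by omega
      simp only [isDyck, Bool.and_eq_true, decide_eq_true_eq]
      refine ⟨hj, ih (j - 1) ?_⟩
      rw [hj1]
      simpa using h3
    · simp only [isJump] at h
      simpa [isDyck] using ih (j + 1) h

lemma endH_succ : ∀ (s : List Bool) (j : ℕ), isJump (j + 1) s = true →
    endH (j + 1) s = endH j s + 1 := by
  intro s
  induction s with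
  | nil => intro j _; rfl
  | cons b s ih =>
    intro j h
    cases b
    · simp only [isJump, Bool.and_eq_true, decide_eq_true_eq] at h
      obtain ⟨h2, h3⟩ := h
      have hj : 1 ≤ j := by omega
      have hj1 : j - 1 + 1 = j := by omega
      simp only [endH, Nat.add_sub_cancel]
      have := ih (j - 1) (by rw [hj1]; simpa using h3)
      rw [hj1] at this
      simpa [this]
    · simp only [isJump] at h
      simpa [endH] using ih (j + 1) h

lemma dwt_eq_jwt (lam rho : ℕ → ℝ) : ∀ (s : List Bool) (j : ℕ), isJump (j + 1) s = true →
    dwt (uWt lam rho) (vWt lam rho) j s = jwt lam (Dd rho) (j + 1) s := by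
  intro s
  induction s with
  | nil => intro j _; rfl
  | cons b s ih =>
    intro j h
    cases b
    · simp only [isJump, Bool.and_eq_true, decide_eq_true_eq] at h
      obtain ⟨h2, h3⟩ := h
      have hj : 1 ≤ j := by omega
      have hj1 : j - 1 + 1 = j := by omega
      have hj2 : j - 1 + 2 = j + 1 := by omega
      have h3' : isJump ((j - 1) + 1) s = true := by rw [hj1]; simpa using h3
      simp only [dwt, jwt, Nat.add_sub_cancel, vWt, hj2]
      rw [ih (j - 1) h3', hj1]
    · simp only [isJump] at h
      simp only [dwt, jwt, uWt]
      rw [ih (j + 1) h]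

lemma Dd_nonneg (rho : ℕ → ℝ) (hrho : ∀ i, 1 ≤ i → 0 ≤ rho i) (j : ℕ) :
    0 ≤ Dd rho j := by
  apply Finset.sum_nonneg
  intro i hi
  exact hrho i (Finset.mem_Icc.mp hi).1

lemma denom_pos (lam rho : ℕ → ℝ) (hlam : ∀ i, 1 ≤ i → 0 < lam i)
    (hrho : ∀ i, 1 ≤ i → 0 ≤ rho i) (j : ℕ) (hj : 1 ≤ j) :
    0 < 1 + lam j + Dd rho j := by
  have := hlam j hj
  have := Dd_nonneg rho hrho j
  linarith

lemma dwt_nonneg (lam rho : ℕ → ℝ) (hlam : ∀ i, 1 ≤ i → 0 < lam i)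
    (hrho : ∀ i, 1 ≤ i → 0 ≤ rho i) :
    ∀ (s : List Bool) (j : ℕ), 0 ≤ dwt (uWt lam rho) (vWt lam rho) j s := by
  have hu : ∀ j, 0 ≤ uWt lam rho j := fun j =>
    div_nonneg (hlam (j + 1) (by omega)).le
      (denom_pos lam rho hlam hrho (j + 1) (by omega)).le
  have hv : ∀ j, 0 ≤ vWt lam rho j := fun j =>
    div_nonneg zero_le_one (denom_pos lam rho hlam hrho (j + 2) (by omega)).le
  intro s
  induction s with
  | nil => intro j; simp [dwt]
  | cons b s ih =>
    intro j
    cases b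
    · exact mul_nonneg (hv _) (ih _)
    · exact mul_nonneg (hu _) (ih _)

lemma jwt_nonneg (lam rho : ℕ → ℝ) (hlam : ∀ i, 1 ≤ i → 0 < lam i)
    (hrho : ∀ i, 1 ≤ i → 0 ≤ rho i) :
    ∀ (s : List Bool) (j : ℕ), 1 ≤ j → isJump j s = true →
      0 ≤ jwt lam (Dd rho) j s := by
  intro s
  induction s with
  | nil => intro j _ _; simp [jwt]
  | cons b s ih =>
    intro j hj h
    cases b
    · simp only [isJump, Bool.and_eq_true, decide_eq_true_eq] at h
      obtain ⟨h2, h3⟩ := h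
      refine mul_nonneg (div_nonneg zero_le_one
        (denom_pos lam rho hlam hrho j hj).le) (ih (j - 1) (by omega) h3)
    · simp only [isJump] at h
      refine mul_nonneg (div_nonneg (hlam j hj).le
        (denom_pos lam rho hlam hrho j hj).le) (ih (j + 1) (by omega) h)

/-- **Lower bound on weighted Catalan numbers via level-2 paths.** For `k ≥ 2`,
`q_2^{(k)} · λ₁/((1+λ₁+D₁)(1+λ₂+D₂)²) ≤ C_k`. -/
theorem q2_le_catalan (lam rho : ℕ → ℝ)
    (hlam : ∀ i, 1 ≤ i → 0 < lam i) (hrho : ∀ i, 1 ≤ i → 0 ≤ rho i)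
    (k : ℕ) (hk : 2 ≤ k) :
    qsum lam rho k 2 *
        (lam 1 / ((1 + lam 1 + Dd rho 1) * (1 + lam 2 + Dd rho 2) ^ 2)) ≤
      Ck lam rho k := by
  classical
  set factor : ℝ := lam 1 / ((1 + lam 1 + Dd rho 1) * (1 + lam 2 + Dd rho 2) ^ 2) with hfac
  have hd1 : 0 < 1 + lam 1 + Dd rho 1 := denom_pos lam rho hlam hrho 1 le_rfl
  have hd2 : 0 < 1 + lam 2 + Dd rho 2 := denom_pos lam rho hlam hrho 2 (by norm_num)
  have hfac_nonneg : 0 ≤ factor :=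
    div_nonneg (hlam 1 le_rfl).le (by positivity)
  -- the three-step suffix
  set suf : List Bool := [false, true, false] with hsuf
  -- weight of the suffix starting at height 1
  have hsufwt : dwt (uWt lam rho) (vWt lam rho) 1 suf = factor := by
    have h1 : dwt (uWt lam rho) (vWt lam rho) 1 suf =
        vWt lam rho 0 * (uWt lam rho 0 * (vWt lam rho 0 * 1)) := rfl
    rw [h1, hfac]
    show (1 : ℝ) / (1 + lam (0 + 2) + Dd rho (0 + 2)) *
        (lam (0 + 1) / (1 + lam (0 + 1) + Dd rho (0 + 1)) *
          (1 / (1 + lam (0 + 2) + Dd rho (0 + 2)) * 1)) = _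
    norm_num
    have hne1 : (1 + lam 1 + Dd rho 1) ≠ 0 := hd1.ne'
    have hne2 : (1 + lam 2 + Dd rho 2) ≠ 0 := hd2.ne'
    field_simp
  -- sigma(2) ∈ [0,1]
  have hsig0 : 0 ≤ sigmaWt rho 2 := by
    apply Finset.prod_nonneg
    intro n hn
    have := Dd_nonneg rho hrho n
    positivity
  have hsig1 : sigmaWt rho 2 ≤ 1 := by
    apply Finset.prod_le_one
    · intro n hn
      have := Dd_nonneg rho hrho n
      positivity
    · intro n hn
      have := Dd_nonneg rho hrho n
      rw [div_le_one (by linarith)]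
      linarith
  -- the injection
  have hlen : ∀ γ : Fin (2 * k - 2 - 1) → Bool,
      (List.ofFn γ ++ suf).length = 2 * k := by
    intro γ
    simp only [List.length_append, List.length_ofFn, hsuf, List.length_cons,
      List.length_nil]
    omega
  set F : (Fin (2 * k - 2 - 1) → Bool) → (Fin (2 * k) → Bool) :=
    fun γ i => (List.ofFn γ ++ suf).getD i false with hF
  have hofn : ∀ γ, List.ofFn (F γ) = List.ofFn γ ++ suf := by
    intro γ
    apply List.ext_getElem
    · simp [hlen γ]
    · intro i h1 h2
      simp only [List.getElem_ofFn, hF]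
      rw [List.getD_eq_getElem _ _ (by simpa using h2)]
  have hFinj : Function.Injective F := by
    intro a b hab
    have : List.ofFn a ++ suf = List.ofFn b ++ suf := by
      rw [← hofn a, ← hofn b, hab]
    exact List.ofFn_injective (List.append_cancel_right this)
  -- the summand of Ck
  set g : (Fin (2 * k) → Bool) → ℝ := fun δ =>
    if isDyck 0 (List.ofFn δ) = true ∧ endH 0 (List.ofFn δ) = 0 then
      dwt (uWt lam rho) (vWt lam rho) 0 (List.ofFn δ)
    else 0 with hg
  have hgnn : ∀ δ, 0 ≤ g δ := by
    intro δ
    simp only [hg]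
    split
    · exact dwt_nonneg lam rho hlam hrho _ _
    · exact le_rfl
  -- termwise bound
  have key : ∀ γ : Fin (2 * k - 2 - 1) → Bool,
      (if isJump 1 (List.ofFn γ) = true ∧ endH 1 (List.ofFn γ) = 2 ∧
          (List.ofFn γ).getLast? = some true then
        jwt lam (Dd rho) 1 (List.ofFn γ) else 0) * (sigmaWt rho 2 * factor) ≤
        g (F γ) := by
    intro γ
    set s := List.ofFn γ with hs
    by_cases hcond : isJump 1 s = true ∧ endH 1 s = 2 ∧ s.getLast? = some true
    · obtain ⟨hJ, hE, hL⟩ := hcond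
      have hend : endH 0 s = 1 := by
        have h01 : endH 1 s = endH 0 s + 1 := by simpa using endH_succ s 0 hJ
        omega
      have hDyck : isDyck 0 (s ++ suf) = true := by
        rw [isDyck_append, isDyck_of_isJump s 0 hJ, hend]
        rfl
      have hendH : endH 0 (s ++ suf) = 0 := by
        rw [endH_append, hend]
        rfl
      have hwt : dwt (uWt lam rho) (vWt lam rho) 0 (s ++ suf) =
          jwt lam (Dd rho) 1 s * factor := by
        rw [dwt_append, hend, hsufwt, dwt_eq_jwt lam rho s 0 hJ]
      have hjnn : 0 ≤ jwt lam (Dd rho) 1 s :=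
        jwt_nonneg lam rho hlam hrho s 1 le_rfl hJ
      rw [if_pos ⟨hJ, hE, hL⟩]
      have hgF : g (F γ) = jwt lam (Dd rho) 1 s * factor := by
        simp only [hg, hofn γ, ← hs]
        rw [if_pos ⟨hDyck, hendH⟩, hwt]
      rw [hgF]
      exact mul_le_mul_of_nonneg_left
        (mul_le_of_le_one_left hfac_nonneg hsig1) hjnn
    · rw [if_neg hcond, zero_mul]
      exact hgnn (F γ)
  -- summing up
  have step1 : qsum lam rho k 2 * factor =
      ∑ γ : Fin (2 * k - 2 - 1) → Bool,
        (if isJump 1 (List.ofFn γ) = true ∧ endH 1 (List.ofFn γ) = 2 ∧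
            (List.ofFn γ).getLast? = some true then
          jwt lam (Dd rho) 1 (List.ofFn γ) else 0) * (sigmaWt rho 2 * factor) := by
    rw [qsum, mul_assoc, ← Finset.sum_mul]
  rw [step1]
  calc (∑ γ : Fin (2 * k - 2 - 1) → Bool,
        (if isJump 1 (List.ofFn γ) = true ∧ endH 1 (List.ofFn γ) = 2 ∧
            (List.ofFn γ).getLast? = some true then
          jwt lam (Dd rho) 1 (List.ofFn γ) else 0) * (sigmaWt rho 2 * factor))
      ≤ ∑ γ : Fin (2 * k - 2 - 1) → Bool, g (F γ) := Finset.sum_le_sum fun γ _ => key γ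
    _ = ∑ δ ∈ Finset.univ.image F, g δ := by
        rw [Finset.sum_image (fun a _ b _ h => hFinj h)]
    _ ≤ ∑ δ : Fin (2 * k) → Bool, g δ := by
        apply Finset.sum_le_sum_of_subset_of_nonneg (Finset.subset_univ _)
        intro δ _ _
        exact hgnn δ
    _ = Ck lam rho k := by rw [Ck]
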